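/- The number of non-crossing arc diagrams on n points (subsets A of {(i,j) : 1 ≤ i < j ≤ n} such that there is no pair of distinct elements (i,j), (k,l) ∈ A with i ≤ k < j ≤ l) equals the n-th Catalan number. -/

import Mathlib

open Finset

def NCP (A : Finset (ℕ × ℕ)) : Prop :=
  ∀ p ∈ A, ∀ q ∈ A, p ≠ q → ¬(p.1 ≤ q.1 ∧ q.1 < p.2 ∧ p.2 ≤ q.2)

instance : DecidablePred NCP := fun A => by unfold NCP; infer_instance

def D (a b : ℕ) : Finset (Finset (ℕ × ℕ)) :=
  ((Finset.Icc a b ×ˢ Finset.Icc a b).filter fun p => p.1 < p.2).powerset.filter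
    fun A => ∀ p ∈ A, ∀ q ∈ A, p ≠ q → ¬(p.1 ≤ q.1 ∧ q.1 < p.2 ∧ p.2 ≤ q.2)

lemma mem_D {a b : ℕ} {A : Finset (ℕ × ℕ)} :
    A ∈ D a b ↔ (∀ p ∈ A, a ≤ p.1 ∧ p.1 < p.2 ∧ p.2 ≤ b) ∧ NCP A := by
  simp only [D, mem_filter, mem_powerset, NCP]
  constructor
  · rintro ⟨hsub, hnc⟩
    refine ⟨fun p hp => ?_, hnc⟩
    have := hsub hp
    simp only [mem_filter, mem_product, mem_Icc] at this
    omega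
  · rintro ⟨h, hnc⟩
    refine ⟨fun p hp => ?_, hnc⟩
    have := h p hp
    simp only [mem_filter, mem_product, mem_Icc]
    omega

lemma NCP_mono {A B : Finset (ℕ × ℕ)} (h : A ⊆ B) (hB : NCP B) : NCP A :=
  fun p hp q hq => hB p (h hp) q (h hq)

lemma card_D_shift (a b : ℕ) : (D (a + 1) (b + 1)).card = (D a b).card := by
  apply Finset.card_nbij' (fun A => A.image (fun p => (p.1 - 1, p.2 - 1)))
      (fun A => A.image (fun p => (p.1 + 1, p.2 + 1)))
  · intro A hA
    rw [Finset.mem_coe, mem_D] at hA ⊢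
    obtain ⟨hb, hnc⟩ := hA
    constructor
    · intro p hp
      simp only [mem_image] at hp
      obtain ⟨q, hq, rfl⟩ := hp
      have := hb q hq
      omega
    · intro p hp q hq hne
      simp only [mem_image] at hp hq
      obtain ⟨p', hp', rfl⟩ := hp
      obtain ⟨q', hq', rfl⟩ := hq
      have hbp := hb p' hp'
      have hbq := hb q' hq'
      have hne' : p' ≠ q' := by rintro rfl; exact hne rfl
      have := hnc p' hp' q' hq' hne'
      simp only [not_and] at this ⊢
      intro h1 h2 h3
      omega
  · intro A hA
    rw [Finset.mem_coe, mem_D] at hA ⊢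
    obtain ⟨hb, hnc⟩ := hA
    constructor
    · intro p hp
      simp only [mem_image] at hp
      obtain ⟨q, hq, rfl⟩ := hp
      have := hb q hq
      omega
    · intro p hp q hq hne
      simp only [mem_image] at hp hq
      obtain ⟨p', hp', rfl⟩ := hp
      obtain ⟨q', hq', rfl⟩ := hq
      have hbp := hb p' hp'
      have hbq := hb q' hq'
      have hne' : p' ≠ q' := by rintro rfl; exact hne rfl
      have := hnc p' hp' q' hq' hne'
      simp only [not_and] at this ⊢
      intro h1 h2 h3
      omega
  · intro A hA
    rw [Finset.mem_coe, mem_D] at hA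
    obtain ⟨hb, -⟩ := hA
    beta_reduce
    rw [Finset.image_image]
    ext p
    simp only [mem_image, Function.comp]
    constructor
    · rintro ⟨q, hq, rfl⟩
      have := hb q hq
      have h1 : q.1 - 1 + 1 = q.1 := by omega
      have h2 : q.2 - 1 + 1 = q.2 := by omega
      rw [h1, h2]
      exact hq
    · intro hp
      refine ⟨p, hp, ?_⟩
      have := hb p hp
      have h1 : p.1 - 1 + 1 = p.1 := by omega
      have h2 : p.2 - 1 + 1 = p.2 := by omega
      rw [h1, h2]
  · intro A hA
    beta_reduce
    rw [Finset.image_image]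
    ext p
    simp only [mem_image, Function.comp]
    constructor
    · rintro ⟨q, hq, rfl⟩
      simpa using hq
    · intro hp
      exact ⟨p, hp, by simp⟩

lemma card_D_add (k a b : ℕ) : (D (a + k) (b + k)).card = (D a b).card := by
  induction k with
  | zero => rfl
  | succ m ih => rw [← Nat.add_assoc, ← Nat.add_assoc, card_D_shift, ih]

lemma D_of_le {a b : ℕ} (h : b ≤ a) : D a b = {∅} := by
  have harcs : ((Finset.Icc a b ×ˢ Finset.Icc a b).filter fun p : ℕ × ℕ => p.1 < p.2) = ∅ := by
    rw [Finset.eq_empty_iff_forall_notMem]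
    intro p hp
    simp only [mem_filter, mem_product, mem_Icc] at hp
    omega
  rw [D, harcs]
  ext A
  simp only [Finset.powerset_empty, mem_filter, mem_singleton]
  constructor
  · rintro ⟨h1, -⟩; exact h1
  · rintro rfl; exact ⟨rfl, by simp⟩

lemma split_arc {n j : ℕ} {A : Finset (ℕ × ℕ)}
    (hb : ∀ p ∈ A, 1 ≤ p.1 ∧ p.1 < p.2 ∧ p.2 ≤ n + 1)
    (hnc : NCP A) (hmem : (1, j) ∈ A) (hj2 : 2 ≤ j) :
    ∀ p ∈ A, p ≠ (1, j) → (2 ≤ p.1 ∧ p.2 < j) ∨ j ≤ p.1 := by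
  intro p hp hne
  have h1 := hb p hp
  have c1 := hnc (1, j) hmem p hp (Ne.symm hne)
  have c2 := hnc p hp (1, j) hmem hne
  simp only [not_and] at c1 c2
  by_contra h
  push_neg at h
  -- c1 : ¬(1 ≤ p.1 ∧ p.1 < j ∧ j ≤ p.2), c2 : ¬(p.1 ≤ 1 ∧ 1 < p.2 ∧ p.2 ≤ j)
  omega

lemma fiber_card {n j : ℕ} (hj2 : 2 ≤ j) (hjn : j ≤ n + 1) :
    ((D 1 (n + 1)).filter (fun A => (1, j) ∈ A)).card =
      (D 2 (j - 1)).card * (D j (n + 1)).card := by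
  rw [← Finset.card_product]
  apply Finset.card_nbij'
      (fun A => (A.filter (fun p => p.2 < j), A.filter (fun p => j ≤ p.1)))
      (fun B => insert (1, j) (B.1 ∪ B.2))
  · intro A hA
    simp only [Finset.mem_coe, mem_filter] at hA
    obtain ⟨hAD, hmem⟩ := hA
    rw [mem_D] at hAD
    obtain ⟨hb, hnc⟩ := hAD
    have hsplit := split_arc hb hnc hmem hj2
    simp only [Finset.mem_coe, mem_product]
    constructor
    · rw [mem_D]
      refine ⟨?_, NCP_mono (Finset.filter_subset _ _) hnc⟩
      intro p hp
      simp only [mem_filter] at hp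
      obtain ⟨hpA, hplt⟩ := hp
      have h1 := hb p hpA
      have hne : p ≠ (1, j) := by
        rintro rfl
        simp only at hplt
        omega
      rcases hsplit p hpA hne with h | h <;> omega
    · rw [mem_D]
      refine ⟨?_, NCP_mono (Finset.filter_subset _ _) hnc⟩
      intro p hp
      simp only [mem_filter] at hp
      obtain ⟨hpA, hpge⟩ := hp
      have h1 := hb p hpA
      omega
  · rintro ⟨B, C⟩ hBC
    simp only [Finset.mem_coe, mem_product] at hBC
    obtain ⟨hB, hC⟩ := hBC
    rw [mem_D] at hB hC
    obtain ⟨hbB, hncB⟩ := hB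
    obtain ⟨hbC, hncC⟩ := hC
    simp only [Finset.mem_coe, mem_filter]
    constructor
    · rw [mem_D]
      constructor
      · intro p hp
        rcases Finset.mem_insert.mp hp with rfl | hp'
        · simp only; omega
        · rcases Finset.mem_union.mp hp' with h | h
          · have := hbB p h; omega
          · have := hbC p h; omega
      · intro p hp q hq hne
        have hBf : ∀ x ∈ B, 2 ≤ x.1 ∧ x.1 < x.2 ∧ x.2 ≤ j - 1 := hbB
        have hCf : ∀ x ∈ C, j ≤ x.1 ∧ x.1 < x.2 ∧ x.2 ≤ n + 1 := hbC
        rcases Finset.mem_insert.mp hp with rfl | hp' <;>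
          rcases Finset.mem_insert.mp hq with hq1 | hq'
        · exact absurd hq1.symm hne
        · rcases Finset.mem_union.mp hq' with h | h
          · have := hBf q h; simp only; omega
          · have := hCf q h; simp only; omega
        · subst hq1
          rcases Finset.mem_union.mp hp' with h | h
          · have := hBf p h; simp only; omega
          · have := hCf p h; simp only; omega
        · rcases Finset.mem_union.mp hp' with h | h <;>
            rcases Finset.mem_union.mp hq' with h' | h'
          · exact hncB p h q h' hne
          · have := hBf p h; have := hCf q h'; omega
          · have := hCf p h; have := hBf q h'; omega
          · exact hncC p h q h' hne
    · exact Finset.mem_insert_self _ _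
  · intro A hA
    simp only [Finset.mem_coe, mem_filter] at hA
    obtain ⟨hAD, hmem⟩ := hA
    rw [mem_D] at hAD
    obtain ⟨hb, hnc⟩ := hAD
    have hsplit := split_arc hb hnc hmem hj2
    ext x
    simp only [Finset.mem_insert, Finset.mem_union, mem_filter]
    constructor
    · rintro (rfl | ⟨hx, -⟩ | ⟨hx, -⟩)
      · exact hmem
      · exact hx
      · exact hx
    · intro hx
      rcases eq_or_ne x (1, j) with rfl | hne
      · exact Or.inl rfl
      · rcases hsplit x hx hne with h | h
        · exact Or.inr (Or.inl ⟨hx, h.2⟩)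
        · exact Or.inr (Or.inr ⟨hx, h⟩)
  · rintro ⟨B, C⟩ hBC
    simp only [Finset.mem_coe, mem_product] at hBC
    obtain ⟨hB, hC⟩ := hBC
    rw [mem_D] at hB hC
    obtain ⟨hbB, -⟩ := hB
    obtain ⟨hbC, -⟩ := hC
    have h1B : (1, j) ∉ B := fun h => by have := hbB _ h; simp only at this; omega
    have h1C : (1, j) ∉ C := fun h => by have := hbC _ h; simp only at this; omega
    refine Prod.ext ?_ ?_
    · ext x
      simp only [Finset.mem_filter, Finset.mem_insert, Finset.mem_union]
      constructor
      · rintro ⟨rfl | hx | hx, hlt⟩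
        · simp only at hlt; omega
        · exact hx
        · exact absurd hlt (by have := hbC x hx; omega)
      · intro hx
        have := hbB x hx
        exact ⟨Or.inr (Or.inl hx), by omega⟩
    · ext x
      simp only [Finset.mem_filter, Finset.mem_insert, Finset.mem_union]
      constructor
      · rintro ⟨rfl | hx | hx, hge⟩
        · simp only at hge; omega
        · exact absurd hge (by have := hbB x hx; omega)
        · exact hx
      · intro hx
        have := hbC x hx
        exact ⟨Or.inr (Or.inr hx), by omega⟩

lemma key (n : ℕ) :
    (D 1 (n + 1)).card =
      (D 2 (n + 1)).card + ∑ j ∈ Icc 2 (n + 1), (D 2 (j - 1)).card * (D j (n + 1)).card := by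
  classical
  set S := D 1 (n + 1) with hS
  have hsplit : S.card = (S.filter (fun A => ∀ p ∈ A, p.1 ≠ 1)).card +
      (S.filter (fun A => ¬ ∀ p ∈ A, p.1 ≠ 1)).card :=
    (Finset.card_filter_add_card_filter_not _).symm
  have h1 : S.filter (fun A => ∀ p ∈ A, p.1 ≠ 1) = D 2 (n + 1) := by
    ext A
    simp only [hS, mem_filter, mem_D]
    constructor
    · rintro ⟨⟨hb, hnc⟩, hno1⟩
      refine ⟨fun p hp => ?_, hnc⟩
      have := hb p hp
      have := hno1 p hp
      omega
    · rintro ⟨hb, hnc⟩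
      refine ⟨⟨fun p hp => ?_, hnc⟩, fun p hp => ?_⟩ <;> have := hb p hp <;> omega
  have h2 : S.filter (fun A => ¬ ∀ p ∈ A, p.1 ≠ 1) =
      (Icc 2 (n + 1)).biUnion (fun j => S.filter (fun A => (1, j) ∈ A)) := by
    ext A
    simp only [mem_filter, Finset.mem_biUnion, mem_Icc]
    constructor
    · rintro ⟨hAS, hex⟩
      push_neg at hex
      obtain ⟨p, hp, hp1⟩ := hex
      have hb := (mem_D.mp hAS).1 p hp
      refine ⟨p.2, by omega, hAS, ?_⟩
      have : p = (1, p.2) := by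
        ext
        · exact hp1
        · rfl
      rwa [← this]
    · rintro ⟨j, hj, hAS, hmem⟩
      refine ⟨hAS, fun h => ?_⟩
      exact h (1, j) hmem rfl
  have hdisj : ∀ x ∈ Icc 2 (n + 1), ∀ y ∈ Icc 2 (n + 1), x ≠ y →
      Disjoint (S.filter (fun A => (1, x) ∈ A)) (S.filter (fun A => (1, y) ∈ A)) := by
    intro x hx y hy hxy
    rw [Finset.disjoint_left]
    intro A hAx hAy
    simp only [mem_filter] at hAx hAy
    obtain ⟨hAS, hmx⟩ := hAx
    obtain ⟨-, hmy⟩ := hAy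
    obtain ⟨hb, hnc⟩ := mem_D.mp hAS
    have hbx := hb _ hmx
    have hby := hb _ hmy
    simp only at hbx hby
    have hne : (1, x) ≠ (1, y) := by simp [hxy]
    rcases lt_or_gt_of_ne hxy with h | h
    · exact hnc (1, x) hmx (1, y) hmy hne (by simp only; omega)
    · exact hnc (1, y) hmy (1, x) hmx hne.symm (by simp only; omega)
  rw [hsplit, h1, h2, Finset.card_biUnion hdisj]
  congr 1
  apply Finset.sum_congr rfl
  intro j hj
  simp only [mem_Icc] at hj
  exact fiber_card hj.1 hj.2

lemma D_card_eq (a b : ℕ) (ha : 1 ≤ a) (hb : a ≤ b + 1) :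
    (D a b).card = (D 1 (b + 1 - a)).card := by
  have h := card_D_add (a - 1) 1 (b + 1 - a)
  have e1 : 1 + (a - 1) = a := by omega
  have e2 : b + 1 - a + (a - 1) = b := by omega
  rw [e1, e2] at h
  exact h

lemma sum_Icc2 (n : ℕ) (f : ℕ → ℕ) : ∑ j ∈ Icc 2 (n + 1), f j = ∑ i ∈ Finset.range n, f (i + 2) := by
  refine Finset.sum_nbij' (fun j => j - 2) (fun i => i + 2) ?_ ?_ ?_ ?_ ?_ <;>
    intro a ha <;> simp only [mem_Icc, Finset.mem_range] at * <;> try omega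
  congr 1
  omega

set_option maxHeartbeats 1000000 in
lemma g_rec (n : ℕ) :
    (D 1 (n + 1)).card = ∑ i ∈ Finset.range (n + 1), (D 1 i).card * (D 1 (n - i)).card := by
  rw [key n]
  have e1 : (D 2 (n + 1)).card = (D 1 n).card := by
    have hn : n + 1 + 1 - 2 = n := by omega
    rw [D_card_eq 2 (n + 1) (by omega) (by omega), hn]
  have e2 : ∀ j ∈ Icc 2 (n + 1), (D 2 (j - 1)).card * (D j (n + 1)).card =
      (D 1 (j - 2)).card * (D 1 (n + 2 - j)).card := by
    intro j hj
    simp only [mem_Icc] at hj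
    rw [D_card_eq 2 (j - 1) (by omega) (by omega), D_card_eq j (n + 1) (by omega) (by omega)]
    congr 2
  rw [Finset.sum_congr rfl e2, e1]
  rw [sum_Icc2 n (fun j => (D 1 (j - 2)).card * (D 1 (n + 2 - j)).card)]
  rw [Finset.sum_range_succ]
  have hlast : (D 1 n).card * (D 1 (n - n)).card = (D 1 n).card := by
    simp [D_of_le (by omega : (0:ℕ) ≤ 1)]
  rw [hlast, Nat.add_comm ((D 1 n).card)]
  congr 1
  apply Finset.sum_congr rfl
  intro i hi
  simp only [Finset.mem_range] at hi
  have h1 : i + 2 - 2 = i := by omega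
  have h2 : n + 2 - (i + 2) = n - i := by omega
  rw [h1, h2]

lemma g_eq_catalan (n : ℕ) : (D 1 n).card = catalan n := by
  induction n using Nat.strong_induction_on with
  | _ n ih =>
    match n with
    | 0 => simp [D_of_le (by omega : (0:ℕ) ≤ 1)]
    | m + 1 =>
      rw [g_rec m, catalan_succ', Finset.Nat.sum_antidiagonal_eq_sum_range_succ_mk]
      apply Finset.sum_congr rfl
      intro i hi
      simp only [Finset.mem_range] at hi
      rw [ih i (by omega), ih (m - i) (by omega)]

theorem noncrossing_arc_diagrams_card (n : ℕ) :
    (((Finset.Icc 1 n ×ˢ Finset.Icc 1 n).filter fun p => p.1 < p.2).powerset.filter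
        fun A => ∀ p ∈ A, ∀ q ∈ A, p ≠ q →
          ¬(p.1 ≤ q.1 ∧ q.1 < p.2 ∧ p.2 ≤ q.2)).card = catalan n := by
  exact g_eq_catalan n
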